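/- Let p be a prime, q = p^e, and let k be an algebraic closure of 𝔽_p. Let g ∈ k with g ≠ 0 and g^{q²} = g, and let b ∈ k. Define S = {v ∈ k : v − v^{q²} = g and v^q·g − v·g^q = b − g^{q+1}}. If b^q + b = g^{q+1}, then S is finite with exactly q elements; if b^q + b ≠ g^{q+1}, then S is empty. -/

import Mathlib

open Polynomial

/-- Over an algebraic closure `k` of `𝔽_p`, let `g ≠ 0` with `g^{q²} = g`,
and `b ∈ k`. Let `S = {v : v − v^{q²} = g ∧ v^q·g − v·g^q = b − g^{q+1}}`. If
`b^q + b = g^{q+1}` then `S` is finite with exactly `q` elements; otherwise `S = ∅`. -/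
theorem stmt_7 (p e q : ℕ) (hp : p.Prime) (he : 1 ≤ e) (hq : q = p ^ e)
    (k : Type*) [Field k] [IsAlgClosed k] [CharP k p]
    (g b : k) (hg0 : g ≠ 0) (hg : g ^ (q ^ 2) = g)
    (S : Set k)
    (hS : S = {v : k | v - v ^ (q ^ 2) = g ∧ v ^ q * g - v * g ^ q = b - g ^ (q + 1)}) :
    (b ^ q + b = g ^ (q + 1) → S.Finite ∧ S.ncard = q) ∧
      (b ^ q + b ≠ g ^ (q + 1) → S = ∅) := by
  classical
  haveI : Fact p.Prime := ⟨hp⟩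
  have hq2 : 2 ≤ q := by
    subst hq; calc 2 ≤ p := hp.two_le
    _ = p ^ 1 := (pow_one p).symm
    _ ≤ p ^ e := Nat.pow_le_pow_right hp.pos he
  -- Key computation using Frobenius
  have key : ∀ v : k, v ^ q * g - v * g ^ q = b - g ^ (q + 1) →
      g ^ q * (v ^ (q ^ 2) - v) = b ^ q + b - 2 * g ^ (q + 1) := by
    intro v h2
    have h2q := congrArg (· ^ q) h2
    rw [hq] at h2q
    rw [sub_pow_char_pow, sub_pow_char_pow, mul_pow, mul_pow, ← pow_mul, ← pow_mul,
      ← pow_mul] at h2q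
    rw [← hq] at h2q
    have hqq : q * q = q ^ 2 := (sq q).symm
    rw [hqq, hg] at h2q
    -- h2q : v ^ (q^2) * g ^ q - v ^ q * g = b ^ q - (g ^ (q+1)) ^ q  (after rewriting)
    have hgpow : g ^ ((q + 1) * q) = g ^ (q + 1) := by
      have : (q + 1) * q = q ^ 2 + q := by ring
      rw [this, pow_add, hg, ← pow_succ']
    rw [hgpow] at h2q
    linear_combination h2q + h2
  have hgq0 : g ^ q ≠ 0 := pow_ne_zero q hg0
  constructor
  · intro hb
    -- The polynomial whose roots are exactly S
    set P : k[X] := C g * X ^ q - C (g ^ q) * X - C (b - g ^ (q + 1)) with hP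
    have hdeg : P.natDegree = q := by
      rw [hP]
      compute_degree! <;>
        first
          | omega
          | (simp only [if_neg (show ¬ q = 1 by omega), if_neg (show ¬ q = 0 by omega),
              sub_zero]; exact hg0)
    have hP0 : P ≠ 0 := fun h => by simp [h] at hdeg; omega
    have hq0 : (q : k) = 0 := by
      rw [hq]; push_cast; rw [CharP.cast_eq_zero k p]; exact zero_pow (by omega)
    have hder : derivative P = -C (g ^ q) := by
      rw [hP]
      simp only [derivative_sub, derivative_mul, derivative_C, derivative_X_pow,
        derivative_X, zero_mul, zero_add, mul_one, hq0]
      simp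
    have hsep : P.Separable := by
      refine ⟨0, -C ((g ^ q)⁻¹), ?_⟩
      rw [hder, zero_mul, zero_add, neg_mul_neg, ← C_mul, inv_mul_cancel₀ hgq0, C_1]
    have hroots : P.roots.card = q := by
      rw [← hdeg]
      exact splits_iff_card_roots.mp (IsAlgClosed.splits P)
    have hnodup : P.roots.Nodup := nodup_roots hsep
    have hSF : S = ↑P.roots.toFinset := by
      ext v
      rw [Finset.mem_coe, Multiset.mem_toFinset, mem_roots hP0]
      simp only [hS, Set.mem_setOf_eq, Finset.coe_sort_coe, Finset.mem_coe,
        Multiset.mem_toFinset, mem_roots hP0, IsRoot.def, hP,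
        eval_sub, eval_mul, eval_C, eval_X, eval_pow]
      constructor
      · rintro ⟨h1, h2⟩
        linear_combination h2
      · intro hev
        have h2 : v ^ q * g - v * g ^ q = b - g ^ (q + 1) := by linear_combination hev
        refine ⟨?_, h2⟩
        have hk := key v h2
        rw [hb] at hk
        have : g ^ q * (v ^ (q ^ 2) - v) = g ^ q * (-g) := by
          rw [hk, pow_succ]; ring
        have := mul_left_cancel₀ hgq0 this
        linear_combination -this
    rw [hSF]
    refine ⟨(P.roots.toFinset : Finset k).finite_toSet, ?_⟩
    rw [Set.ncard_coe_finset, Multiset.toFinset_card_of_nodup hnodup, hroots]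
  · intro hb
    rw [hS]
    ext v
    simp only [Set.mem_setOf_eq, Set.mem_empty_iff_false, iff_false, not_and]
    intro h1 h2
    have hk := key v h2
    have hvg : v ^ (q ^ 2) - v = -g := by linear_combination -h1
    rw [hvg] at hk
    apply hb
    have hgg : g ^ q * -g = -g ^ (q + 1) := by rw [pow_succ]; ring
    rw [hgg] at hk
    linear_combination -hk
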